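/- With notation as in the setup, let q₀, q₁, …, q_G ∈ ℂ[[X]][Y] be monic polynomials with deg_Y q_i = N/E_i for each i. Then every φ ∈ ℂ[[X]][Y] can be written uniquely as a finite sum φ = Σ α_{i₀…i_G}·q₀^{i₀}q₁^{i₁}⋯q_G^{i_G}, where i_G ∈ ℕ, 0 ≤ i_k < N_{k+1} for 0 ≤ k ≤ G−1, and α_{i₀…i_G} ∈ ℂ[[X]]. Moreover: (1) the Y-degrees of the nonzero terms α_{i₀…i_G}q₀^{i₀}⋯q_G^{i_G} are pairwise distinct; (2) if in addition each q_k is a k-semiroot of f, then the T-adic orders of the nonzero series α_{i₀…i_G}(T^N)·q₀(T^N,y(T))^{i₀}⋯q_{G−1}(T^N,y(T))^{i_{G−1}} are pairwise distinct as (i₀,…,i_{G−1}) and the coefficient vary over the indices appearing with nonzero coefficient. -/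

import Mathlib

noncomputable section

/-- The substitution `X ↦ T ^ n` on formal power series, described coefficientwise:
the coefficient of `T ^ j` in `substPow n σ` is the coefficient of `X ^ (j / n)` in `σ`
when `n ∣ j`, and `0` otherwise. -/
def substPow (n : ℕ) (σ : PowerSeries ℂ) : PowerSeries ℂ :=
  PowerSeries.mk fun j => if n ∣ j then PowerSeries.coeff (j / n) σ else 0

/-- The power series `φ (T ^ n, w (T))`, for `φ ∈ ℂ[[X]][Y]` and `w ∈ ℂ[[T]]`. -/
def evalCurve (n : ℕ) (w : PowerSeries ℂ) (φ : Polynomial (PowerSeries ℂ)) :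
    PowerSeries ℂ :=
  ∑ i ∈ Finset.range (φ.natDegree + 1), substPow n (φ.coeff i) * w ^ i

/-- `X = T ^ n`, `Y = w (T)` is a primitive Newton–Puiseux parameterization of the curve
defined by `q ∈ ℂ[[X]][Y]`: one has `q (T ^ n, w (T)) = 0`, `w` has zero constant term, and
`gcd ({n} ∪ {j : coeff j w ≠ 0}) = 1`. -/
def IsNPParam (q : Polynomial (PowerSeries ℂ)) (n : ℕ) (w : PowerSeries ℂ) : Prop :=
  evalCurve n w q = 0 ∧ PowerSeries.constantCoeff w = 0 ∧
    ∀ d : ℕ, d ∣ n → (∀ j, PowerSeries.coeff j w ≠ 0 → d ∣ j) → d = 1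

/-- `B 0, B 1, …, B G` is the characteristic sequence of the primitive Newton–Puiseux
parameterization `X = T ^ n`, `Y = w (T)`:  `B 0 = n`; for `1 ≤ i ≤ G`, `B i` is the least
exponent `j` of a nonzero term of `w` such that `gcd (B 0, …, B (i-1)) ∤ j`; and `G` is the
least index for which `gcd (B 0, …, B G) = 1`. -/
def IsCharSeq (n : ℕ) (w : PowerSeries ℂ) (G : ℕ) (B : ℕ → ℕ) : Prop :=
  B 0 = n ∧
    (∀ i, 1 ≤ i → i ≤ G →
      B i = sInf {j : ℕ | PowerSeries.coeff j w ≠ 0 ∧ ¬ (Finset.range i).gcd B ∣ j}) ∧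
    (Finset.range (G + 1)).gcd B = 1 ∧ ∀ i < G, (Finset.range (i + 1)).gcd B ≠ 1

/-- `Ebar B i = gcd (B 0, …, B i)`, the sequence of greatest common divisors. -/
def Ebar (B : ℕ → ℕ) (i : ℕ) : ℕ := (Finset.range (i + 1)).gcd B

/-- The generators of the semigroup:
`B̄ 0 = B 0` and `B̄ i = B i + Σ_{k=1}^{i-1} ((E (k-1) - E k) / E (i-1)) * B k` for `i ≥ 1`. -/
def Bbar (B : ℕ → ℕ) (i : ℕ) : ℕ :=
  if i = 0 then B 0
  else B i + ∑ k ∈ Finset.Ico 1 i, ((Ebar B (k - 1) - Ebar B k) / Ebar B (i - 1)) * B k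

/-- `B̄ i` as an extended natural number, with the convention `B̄ (G + 1) = ∞`. -/
def BbarTop (G : ℕ) (B : ℕ → ℕ) (i : ℕ) : ℕ∞ :=
  if i ≤ G then (Bbar B i : ℕ∞) else ⊤

/-- `q` is a `k`-semiroot of the branch parameterized by `X = T ^ N`, `Y = y (T)` with
characteristic sequence `B 0, …, B G`:  `q` is monic of `Y`-degree `N / E k` and the
intersection number `(f, q)`, i.e. the `T`-adic order of `q (T ^ N, y (T))`, equals
`B̄ (k+1)` (which is `∞` for `k = G`). -/
def IsSemiroot (N : ℕ) (y : PowerSeries ℂ) (G : ℕ) (B : ℕ → ℕ) (k : ℕ)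
    (q : Polynomial (PowerSeries ℂ)) : Prop :=
  q.Monic ∧ q.natDegree = N / Ebar B k ∧ (evalCurve N y q).order = BbarTop G B (k + 1)

section EB
variable (B : ℕ → ℕ)

lemma Ebar_dvd_B {k j : ℕ} (h : j ≤ k) : Ebar B k ∣ B j :=
  Finset.gcd_dvd (Finset.mem_range.mpr (Nat.lt_succ_of_le h))

lemma Ebar_dvd_Ebar {j k : ℕ} (h : j ≤ k) : Ebar B k ∣ Ebar B j :=
  Finset.dvd_gcd fun i hi => Ebar_dvd_B B (le_trans (Nat.lt_succ_iff.mp (Finset.mem_range.mp hi)) h)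

lemma Ebar_zero : Ebar B 0 = B 0 := by
  simp [Ebar, Finset.range_one]

lemma Ebar_succ (k : ℕ) : Ebar B (k + 1) = Nat.gcd (B (k + 1)) (Ebar B k) := by
  rw [Ebar, Finset.range_add_one, Finset.gcd_insert]
  rfl

lemma Ebar_pos {k : ℕ} (hB0 : 0 < B 0) : 0 < Ebar B k :=
  Nat.pos_of_ne_zero fun h => by
    have := Ebar_dvd_B B (Nat.zero_le k)
    rw [h] at this
    omega

lemma Bbar_zero : Bbar B 0 = B 0 := rfl

lemma Bbar_one : Bbar B 1 = B 1 := by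
  simp [Bbar]

lemma Bbar_of_pos {i : ℕ} (hi : i ≠ 0) : Bbar B i
    = B i + ∑ k ∈ Finset.Ico 1 i, ((Ebar B (k - 1) - Ebar B k) / Ebar B (i - 1)) * B k := by
  rw [Bbar, if_neg hi]

/-- The recursion `B̄_{i+1} + B_i = (E_{i-1}/E_i) B̄_i + B_{i+1}` for `i ≥ 1`. -/
lemma Bbar_rec {i : ℕ} (hi : 1 ≤ i) (hB0 : 0 < B 0) :
    Bbar B (i + 1) + B i = (Ebar B (i - 1) / Ebar B i) * Bbar B i + B (i + 1) := by
  have epos : ∀ k, 0 < Ebar B k := fun k => Ebar_pos B hB0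
  have hEd : Ebar B i ∣ Ebar B (i - 1) := Ebar_dvd_Ebar B (Nat.sub_le i 1)
  rw [Bbar_of_pos B (by omega : i + 1 ≠ 0), Bbar_of_pos B (by omega : i ≠ 0)]
  have h1 : i + 1 - 1 = i := by omega
  rw [h1, Finset.sum_Ico_succ_top hi, mul_add, Finset.mul_sum]
  have hterm : ∀ k ∈ Finset.Ico 1 i,
      (Ebar B (i - 1) / Ebar B i) * (((Ebar B (k - 1) - Ebar B k) / Ebar B (i - 1)) * B k)
        = ((Ebar B (k - 1) - Ebar B k) / Ebar B i) * B k := by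
    intro k hk
    obtain ⟨hk1, hk2⟩ := Finset.mem_Ico.mp hk
    have hd1 : Ebar B (i - 1) ∣ Ebar B (k - 1) := Ebar_dvd_Ebar B (by omega)
    have hd2 : Ebar B (i - 1) ∣ Ebar B k := Ebar_dvd_Ebar B (by omega)
    have hdd : Ebar B (i - 1) ∣ (Ebar B (k - 1) - Ebar B k) := Nat.dvd_sub hd1 hd2
    rw [← mul_assoc]
    congr 1
    rw [Nat.div_mul_div_comm hEd hdd, mul_comm (Ebar B i) (Ebar B (i-1))]
    exact Nat.mul_div_mul_left _ _ (epos (i-1))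
  rw [Finset.sum_congr rfl hterm]
  obtain ⟨t, ht⟩ := hEd
  have tpos : 1 ≤ t := by
    rcases Nat.eq_zero_or_pos t with h | h
    · exfalso; rw [h, mul_zero] at ht; exact absurd ht (by have := epos (i-1); omega)
    · exact h
  have t1 : Ebar B (i - 1) / Ebar B i = t := by
    rw [ht]; exact Nat.mul_div_cancel_left t (epos i)
  have t2 : (Ebar B (i - 1) - Ebar B i) / Ebar B i = t - 1 := by
    obtain ⟨s, rfl⟩ : ∃ s, t = s + 1 := ⟨t - 1, by omega⟩
    rw [ht, Nat.mul_succ, Nat.add_sub_cancel, Nat.mul_div_cancel_left s (epos i)]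
    simp
  rw [t1, t2]
  have hb : (t - 1) * B i + B i = t * B i := by
    have h1 : (t - 1) * B i = t * B i - B i := by rw [Nat.sub_one_mul]
    have h2 : B i ≤ t * B i := Nat.le_mul_of_pos_left _ tpos
    omega
  generalize (∑ k ∈ Finset.Ico 1 i, ((Ebar B (k - 1) - Ebar B k) / Ebar B i) * B k) = A
  generalize hgb : (t - 1) * B i = a at hb
  generalize t * B i = b at hb
  omega

lemma Ebar_dvd_Bbar {j k : ℕ} (h : j ≤ k) (hB0 : 0 < B 0) : Ebar B k ∣ Bbar B j := by
  induction j with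
  | zero => rw [Bbar_zero]; exact Ebar_dvd_B B (Nat.zero_le k)
  | succ j ih =>
    rcases Nat.eq_zero_or_pos j with rfl | hj
    · rw [Bbar_one]; exact Ebar_dvd_B B h
    · have hrec := Bbar_rec B hj hB0
      have hd1 : Ebar B k ∣ (Ebar B (j - 1) / Ebar B j) * Bbar B j + B (j + 1) :=
        Nat.dvd_add (Dvd.dvd.mul_left (ih (by omega)) _) (Ebar_dvd_B B h)
      rw [← hrec] at hd1
      have hd2 : Ebar B k ∣ B j := Ebar_dvd_B B (by omega)
      exact (Nat.dvd_add_right hd2).mp (by rwa [add_comm] at hd1)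

lemma gcd_Ebar_Bbar (m : ℕ) (hB0 : 0 < B 0) :
    Nat.gcd (Ebar B m) (Bbar B (m + 1)) = Ebar B (m + 1) := by
  rcases Nat.eq_zero_or_pos m with rfl | hm
  · rw [Bbar_one, Ebar_succ, Nat.gcd_comm]
  · have hrec := Bbar_rec B hm hB0
    obtain ⟨s, hs⟩ : Ebar B m ∣ (Ebar B (m - 1) / Ebar B m) * Bbar B m :=
      Dvd.dvd.mul_left (Ebar_dvd_Bbar B le_rfl hB0) _
    obtain ⟨u, hu⟩ : Ebar B m ∣ B m := Ebar_dvd_B B le_rfl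
    have key : Bbar B (m + 1) + Ebar B m * u = Ebar B m * s + B (m + 1) := by
      rw [← hu, ← hs]; exact hrec
    rw [Ebar_succ]
    calc Nat.gcd (Ebar B m) (Bbar B (m + 1))
        = Nat.gcd (Ebar B m) (Bbar B (m + 1) + Ebar B m * u) :=
          (Nat.gcd_add_mul_left_right _ _ _).symm
      _ = Nat.gcd (Ebar B m) (Ebar B m * s + B (m + 1)) := by rw [key]
      _ = Nat.gcd (Ebar B m) (B (m + 1) + Ebar B m * s) := by rw [add_comm]
      _ = Nat.gcd (Ebar B m) (B (m + 1)) := Nat.gcd_add_mul_left_right _ _ _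
      _ = Nat.gcd (B (m + 1)) (Ebar B m) := Nat.gcd_comm _ _
end EB

/-- Key arithmetic: the values `B0*a + Σ_{k<G} i_k * B̄_{k+1}` determine the digits `i_k`. -/
lemma orders_distinct (B : ℕ → ℕ) (G : ℕ) (hB0 : 0 < B 0) (i j : ℕ → ℕ)
    (hi : ∀ k, k < G → i k < Ebar B k / Ebar B (k + 1))
    (hj : ∀ k, k < G → j k < Ebar B k / Ebar B (k + 1)) (a b : ℕ)
    (hne : ∃ k, k < G ∧ i k ≠ j k) :
    B 0 * a + ∑ k ∈ Finset.range G, i k * Bbar B (k + 1) ≠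
      B 0 * b + ∑ k ∈ Finset.range G, j k * Bbar B (k + 1) := by
  intro h
  classical
  set s := (Finset.range G).filter (fun k => i k ≠ j k) with hs
  have hsne : s.Nonempty := by
    obtain ⟨k, hk, hkne⟩ := hne
    exact ⟨k, Finset.mem_filter.mpr ⟨Finset.mem_range.mpr hk, hkne⟩⟩
  obtain ⟨m, hms, hmax⟩ := Finset.exists_max_image s id hsne
  obtain ⟨hmG, hmne⟩ := Finset.mem_filter.mp hms
  have hmG' : m < G := Finset.mem_range.mp hmG
  -- move to ℤ
  have hZ : (B 0 : ℤ) * a + ∑ k ∈ Finset.range G, (i k : ℤ) * (Bbar B (k + 1) : ℤ)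
      = (B 0 : ℤ) * b + ∑ k ∈ Finset.range G, (j k : ℤ) * (Bbar B (k + 1) : ℤ) := by
    exact_mod_cast h
  have hsum : ∑ k ∈ Finset.range G, ((i k : ℤ) - (j k : ℤ)) * (Bbar B (k + 1) : ℤ)
      = (B 0 : ℤ) * ((b : ℤ) - (a : ℤ)) := by
    have : ∑ k ∈ Finset.range G, ((i k : ℤ) - (j k : ℤ)) * (Bbar B (k + 1) : ℤ)
        = ∑ k ∈ Finset.range G, (i k : ℤ) * (Bbar B (k + 1) : ℤ)
          - ∑ k ∈ Finset.range G, (j k : ℤ) * (Bbar B (k + 1) : ℤ) := by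
      rw [← Finset.sum_sub_distrib]
      exact Finset.sum_congr rfl fun k _ => by ring
    rw [this]
    linarith
  have hedvd : (Ebar B m : ℤ) ∣ ((i m : ℤ) - (j m : ℤ)) * (Bbar B (m + 1) : ℤ) := by
    have hsplit : ∑ k ∈ (Finset.range G).erase m, ((i k : ℤ) - (j k : ℤ)) * (Bbar B (k + 1) : ℤ)
        + ((i m : ℤ) - (j m : ℤ)) * (Bbar B (m + 1) : ℤ)
        = ∑ k ∈ Finset.range G, ((i k : ℤ) - (j k : ℤ)) * (Bbar B (k + 1) : ℤ) :=
      Finset.sum_erase_add _ _ hmG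
    have h1 : (Ebar B m : ℤ) ∣ ∑ k ∈ (Finset.range G).erase m,
        ((i k : ℤ) - (j k : ℤ)) * (Bbar B (k + 1) : ℤ) := by
      refine Finset.dvd_sum fun k hk => ?_
      obtain ⟨hkm, hkG⟩ := Finset.mem_erase.mp hk
      by_cases hlt : k < m
      · exact Dvd.dvd.mul_left
          (Int.natCast_dvd_natCast.mpr (Ebar_dvd_Bbar B (by omega : k + 1 ≤ m) hB0)) _
      · have : k ∉ s := fun hks => hkm (le_antisymm (hmax k hks) (by omega))
        have : i k = j k := by
          by_contra hc
          exact this (Finset.mem_filter.mpr ⟨hkG, hc⟩)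
        rw [this]
        simp
    have h2 : (Ebar B m : ℤ) ∣ (B 0 : ℤ) * ((b : ℤ) - (a : ℤ)) :=
      Dvd.dvd.mul_right (Int.natCast_dvd_natCast.mpr (Ebar_dvd_B B (Nat.zero_le m))) _
    have h3 : ((i m : ℤ) - (j m : ℤ)) * (Bbar B (m + 1) : ℤ)
        = (B 0 : ℤ) * ((b : ℤ) - (a : ℤ))
          - ∑ k ∈ (Finset.range G).erase m, ((i k : ℤ) - (j k : ℤ)) * (Bbar B (k + 1) : ℤ) := by
      rw [← hsum, ← hsplit]; ring
    rw [h3]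
    exact dvd_sub h2 h1
  -- now use gcd (E m) (Bbar (m+1)) = E (m+1)
  have epos : ∀ k, 0 < Ebar B k := fun k => Ebar_pos B hB0
  obtain ⟨rr, hrr⟩ : Ebar B (m + 1) ∣ Ebar B m := Ebar_dvd_Ebar B (Nat.le_succ m)
  obtain ⟨w, hw⟩ : Ebar B (m + 1) ∣ Bbar B (m + 1) := by
    rw [← gcd_Ebar_Bbar B m hB0]; exact Nat.gcd_dvd_right _ _
  have hrr' : Ebar B m / Ebar B (m + 1) = rr := by
    rw [hrr]; exact Nat.mul_div_cancel_left rr (epos (m + 1))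
  have hcop : Nat.Coprime rr w := by
    have := gcd_Ebar_Bbar B m hB0
    rw [hrr, hw, Nat.gcd_mul_left] at this
    have h4 := epos (m + 1)
    have : Nat.gcd rr w = 1 := by
      nlinarith [Nat.le_of_eq this, Nat.le_of_eq this.symm]
    exact this
  -- cancel E (m+1) in the divisibility
  have hedvd2 : (rr : ℤ) ∣ ((i m : ℤ) - (j m : ℤ)) * (w : ℤ) := by
    have hne0 : (Ebar B (m + 1) : ℤ) ≠ 0 := by exact_mod_cast (epos (m + 1)).ne'
    rw [hrr, hw] at hedvd
    push_cast at hedvd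
    rw [mul_comm (Ebar B (m + 1) : ℤ) (rr : ℤ), mul_comm (Ebar B (m + 1) : ℤ) (w : ℤ)] at hedvd
    rcases hedvd with ⟨c, hc⟩
    refine ⟨c, ?_⟩
    have : (Ebar B (m + 1) : ℤ) * (((i m : ℤ) - (j m : ℤ)) * (w : ℤ))
        = (Ebar B (m + 1) : ℤ) * ((rr : ℤ) * c) := by
      rw [← mul_assoc, ← mul_assoc]; linarith [hc]
    exact mul_left_cancel₀ hne0 this
  have hrdvd : (rr : ℤ) ∣ ((i m : ℤ) - (j m : ℤ)) := by
    have hic : IsCoprime (rr : ℤ) (w : ℤ) := by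
      rw [Int.isCoprime_iff_gcd_eq_one]
      exact_mod_cast hcop
    exact hic.dvd_of_dvd_mul_right hedvd2
  have hib : i m < rr := hrr' ▸ hi m hmG'
  have hjb : j m < rr := hrr' ▸ hj m hmG'
  have hzz : (i m : ℤ) - (j m : ℤ) = 0 := by
    by_contra hz
    have habs : |(i m : ℤ) - (j m : ℤ)| < rr := by
      rw [abs_lt]; omega
    have hle : (rr : ℤ) ≤ |(i m : ℤ) - (j m : ℤ)| :=
      Int.le_of_dvd (abs_pos.mpr hz) ((dvd_abs _ _).mpr hrdvd)
    omega
  exact hmne (by exact_mod_cast sub_eq_zero.mp hzz)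

section MixedRadix
variable {L : ℕ} {d r : ℕ → ℕ}

lemma mr_chain (hdr : ∀ k, k < L → d (k + 1) = d k * r k) {a b : ℕ} (ha : a ≤ b) (hb : b ≤ L) :
    d b = d a * ∏ j ∈ Finset.Ico a b, r j := by
  induction b, ha using Nat.le_induction with
  | base => simp
  | succ b hab ih =>
    rw [hdr b (by omega), ih (by omega), Finset.prod_Ico_succ_top hab, mul_assoc]

lemma mr_split (i : ℕ → ℕ) (m : ℕ) (hm : m < L) :
    ∑ k ∈ Finset.Ico m (L + 1), i k * ∏ j ∈ Finset.Ico m k, r j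
      = i m + r m * ∑ k ∈ Finset.Ico (m + 1) (L + 1), i k * ∏ j ∈ Finset.Ico (m + 1) k, r j := by
  rw [Finset.sum_eq_sum_Ico_succ_bot (by omega : m < L + 1)]
  rw [Finset.Ico_self, Finset.prod_empty, mul_one]
  congr 1
  rw [Finset.mul_sum]
  refine Finset.sum_congr rfl fun k hk => ?_
  have hk1 : m < k := (Finset.mem_Ico.mp hk).1
  rw [Finset.prod_eq_prod_Ico_succ_bot hk1]
  ring

lemma mr_div (hd0 : d 0 = 1) (hdr : ∀ k, k < L → d (k + 1) = d k * r k)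
    (i : ℕ → ℕ) (hi : ∀ k, k < L → i k < r k) :
    ∀ m, m ≤ L → (∑ k ∈ Finset.range (L + 1), i k * d k) / d m
      = ∑ k ∈ Finset.Ico m (L + 1), i k * ∏ j ∈ Finset.Ico m k, r j := by
  intro m
  induction m with
  | zero =>
    intro _
    rw [hd0, Nat.div_one, Finset.range_eq_Ico]
    refine Finset.sum_congr rfl fun k hk => ?_
    have hkL : k ≤ L := by have := Finset.mem_Ico.mp hk; omega
    rw [mr_chain hdr (Nat.zero_le k) hkL, hd0, one_mul]
  | succ m ih =>
    intro hm
    have hmL : m < L := hm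
    rw [hdr m hmL, ← Nat.div_div_eq_div_mul, ih (le_of_lt hmL), mr_split i m hmL,
      Nat.add_mul_div_left _ _ (by have := hi m hmL; omega : 0 < r m),
      Nat.div_eq_of_lt (hi m hmL), zero_add]

lemma mr_digit_lt (hd0 : d 0 = 1) (hdr : ∀ k, k < L → d (k + 1) = d k * r k)
    (i : ℕ → ℕ) (hi : ∀ k, k < L → i k < r k) (m : ℕ) (hm : m < L) :
    (∑ k ∈ Finset.range (L + 1), i k * d k) / d m % r m = i m := by
  rw [mr_div hd0 hdr i hi m (le_of_lt hm), mr_split i m hm,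
    Nat.add_mul_mod_self_left, Nat.mod_eq_of_lt (hi m hm)]

lemma mr_digit_top (hd0 : d 0 = 1) (hdr : ∀ k, k < L → d (k + 1) = d k * r k)
    (i : ℕ → ℕ) (hi : ∀ k, k < L → i k < r k) :
    (∑ k ∈ Finset.range (L + 1), i k * d k) / d L = i L := by
  rw [mr_div hd0 hdr i hi L le_rfl]
  simp

lemma mr_mod (hd0 : d 0 = 1) (hdr : ∀ k, k < L → d (k + 1) = d k * r k) :
    ∀ m, m ≤ L → ∀ n, n % d m = ∑ k ∈ Finset.range m, (n / d k % r k) * d k := by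
  intro m
  induction m with
  | zero => intro _ n; simp [hd0, Nat.mod_one]
  | succ m ih =>
    intro hm n
    rw [hdr m hm, Nat.mod_mul, ih (by omega) n, Finset.sum_range_succ, mul_comm (d m)]

lemma mr_sum (hd0 : d 0 = 1) (hdr : ∀ k, k < L → d (k + 1) = d k * r k) (n : ℕ) :
    ∑ k ∈ Finset.range L, (n / d k % r k) * d k + n / d L * d L = n := by
  have h1 := mr_mod hd0 hdr L le_rfl n
  have h2 : n % d L + d L * (n / d L) = n := Nat.mod_add_div n (d L)
  rw [← h1, mul_comm (n / d L)]
  omega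

end MixedRadix

section Expansion
open Polynomial
variable {R : Type*} [CommRing R] [Nontrivial R] {I : Type*}

lemma expansion_exists (p : I → Polynomial R) (Adm : I → Prop)
    (hp : ∀ i, Adm i → (p i).Monic) (dig : ℕ → I) (hdigA : ∀ n, Adm (dig n))
    (hdigd : ∀ n, (p (dig n)).natDegree = n) :
    ∀ n : ℕ, ∀ φ : Polynomial R, φ.degree < (n : WithBot ℕ) →
      ∃ c : I →₀ R, (∀ i ∈ c.support, Adm i) ∧ φ = c.sum fun i a => Polynomial.C a * p i := by
  intro n
  induction n with
  | zero =>
    intro φ h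
    by_cases hφ : φ = 0
    · exact ⟨0, by simp, by simp [Finsupp.sum_zero_index, hφ]⟩
    · exfalso
      rw [Polynomial.degree_eq_natDegree hφ] at h
      exact (Nat.not_lt_zero _) (by exact_mod_cast h)
  | succ n ih =>
    intro φ h
    by_cases hφ : φ = 0
    · exact ⟨0, by simp, by simp [Finsupp.sum_zero_index, hφ]⟩
    · set m := φ.natDegree with hm
      set lc := φ.leadingCoeff with hlc
      have hlc0 : lc ≠ 0 := Polynomial.leadingCoeff_ne_zero.mpr hφ
      have hmono := hp (dig m) (hdigA m)
      have hdm : (p (dig m)).natDegree = m := hdigd m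
      have hdegφ : φ.degree = (m : WithBot ℕ) := Polynomial.degree_eq_natDegree hφ
      have hdegp : (Polynomial.C lc * p (dig m)).degree = φ.degree := by
        rw [hmono.degree_mul, Polynomial.degree_C hlc0, zero_add,
          Polynomial.degree_eq_natDegree hmono.ne_zero, hdm, hdegφ]
      have hlcp : (Polynomial.C lc * p (dig m)).leadingCoeff = lc := by
        rw [Polynomial.leadingCoeff_mul_monic hmono, Polynomial.leadingCoeff_C]
      have hψ : (φ - Polynomial.C lc * p (dig m)).degree < φ.degree :=
        Polynomial.degree_sub_lt hdegp.symm hφ hlcp.symm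
      have hmn : (m : WithBot ℕ) ≤ (n : WithBot ℕ) := by
        have : (m : WithBot ℕ) < ((n + 1 : ℕ) : WithBot ℕ) := hdegφ ▸ h
        exact_mod_cast Nat.lt_succ_iff.mp (by exact_mod_cast this)
      obtain ⟨c', hc'A, hc'⟩ := ih (φ - Polynomial.C lc * p (dig m))
        (lt_of_lt_of_le (hdegφ ▸ hψ) hmn)
      classical
      refine ⟨Finsupp.single (dig m) lc + c', ?_, ?_⟩
      · intro i hi
        rcases Finset.mem_union.mp (Finsupp.support_add hi) with h1 | h2
        · have := Finsupp.support_single_subset h1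
          rw [Finset.mem_singleton] at this
          rw [this]; exact hdigA m
        · exact hc'A i h2
      · rw [Finsupp.sum_add_index' (fun i => by simp) (fun i a b => by
          rw [Polynomial.C_add, add_mul]),
          Finsupp.sum_single_index (by simp)]
        rw [← hc']
        ring

lemma expansion_unique (p : I → Polynomial R) (Adm : I → Prop) (ι : I → ℕ)
    (hp : ∀ i, Adm i → (p i).Monic) (hpd : ∀ i, Adm i → (p i).natDegree = ι i)
    (hinj : ∀ i j, Adm i → Adm j → ι i = ι j → i = j)
    (c₁ c₂ : I →₀ R) (h₁ : ∀ i ∈ c₁.support, Adm i) (h₂ : ∀ i ∈ c₂.support, Adm i)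
    (h : (c₁.sum fun i a => Polynomial.C a * p i) = c₂.sum fun i a => Polynomial.C a * p i) :
    c₁ = c₂ := by
  classical
  by_contra hne
  obtain ⟨i₁, hi₁⟩ := Finsupp.ne_iff.mp hne
  set u := c₁.support ∪ c₂.support with hu
  set s := u.filter (fun i => c₁ i ≠ c₂ i) with hs
  have hAdm : ∀ i ∈ u, Adm i := by
    intro i hi
    rcases Finset.mem_union.mp hi with h' | h'
    · exact h₁ i h'
    · exact h₂ i h'
  have hsne : s.Nonempty := by
    refine ⟨i₁, Finset.mem_filter.mpr ⟨?_, hi₁⟩⟩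
    by_cases hc : c₁ i₁ = 0
    · exact Finset.mem_union_right _ (Finsupp.mem_support_iff.mpr (hc ▸ (Ne.symm hi₁)))
    · exact Finset.mem_union_left _ (Finsupp.mem_support_iff.mpr hc)
  obtain ⟨i₀, hi₀s, hmax⟩ := Finset.exists_max_image s ι hsne
  obtain ⟨hi₀u, hi₀ne⟩ := Finset.mem_filter.mp hi₀s
  have hA₀ := hAdm i₀ hi₀u
  have hsum : ∀ c : I →₀ R, c.support ⊆ u →
      (c.sum fun i a => Polynomial.C a * p i) = ∑ i ∈ u, Polynomial.C (c i) * p i :=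
    fun c hc => Finsupp.sum_of_support_subset c hc _ (fun i _ => by simp)
  rw [hsum c₁ Finset.subset_union_left, hsum c₂ Finset.subset_union_right] at h
  have hc := congrArg (fun ψ => Polynomial.coeff ψ (ι i₀)) h
  simp only [Polynomial.finset_sum_coeff] at hc
  rw [← Finset.sum_erase_add u _ hi₀u, ← Finset.sum_erase_add u
    (fun i => (Polynomial.C (c₂ i) * p i).coeff (ι i₀)) hi₀u] at hc
  have hterm : ∀ i ∈ u.erase i₀,
      (Polynomial.C (c₁ i) * p i).coeff (ι i₀) = (Polynomial.C (c₂ i) * p i).coeff (ι i₀) := by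
    intro i hi
    obtain ⟨hine, hiu⟩ := Finset.mem_erase.mp hi
    by_cases hceq : c₁ i = c₂ i
    · rw [hceq]
    · have hisg : i ∈ s := Finset.mem_filter.mpr ⟨hiu, hceq⟩
      have hAi := hAdm i hiu
      have hlt : ι i < ι i₀ :=
        lt_of_le_of_ne (hmax i hisg) (fun hieq => hine (hinj i i₀ hAi hA₀ hieq))
      have hz : (p i).coeff (ι i₀) = 0 :=
        Polynomial.coeff_eq_zero_of_natDegree_lt (by rw [hpd i hAi]; exact hlt)
      rw [Polynomial.coeff_C_mul, Polynomial.coeff_C_mul, hz, mul_zero, mul_zero]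
  rw [Finset.sum_congr rfl hterm] at hc
  have hfin := add_left_cancel hc
  rw [Polynomial.coeff_C_mul, Polynomial.coeff_C_mul] at hfin
  have hone : (p i₀).coeff (ι i₀) = 1 := by
    rw [← hpd i₀ hA₀]; exact (hp i₀ hA₀).coeff_natDegree
  rw [hone, mul_one, mul_one] at hfin
  exact hi₀ne hfin

end Expansion

section Orders
open PowerSeries

lemma order_pow' (x : PowerSeries ℂ) (n : ℕ) : (x ^ n).order = n * x.order := by
  induction n with
  | zero => simp [PowerSeries.order_one]
  | succ n ih =>
    rw [pow_succ, PowerSeries.order_mul, ih]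
    push_cast
    ring

lemma order_prod' {β : Type*} (s : Finset β) (f : β → PowerSeries ℂ) :
    (∏ k ∈ s, f k).order = ∑ k ∈ s, (f k).order := by
  classical
  induction s using Finset.induction_on with
  | empty => simp [PowerSeries.order_one]
  | insert a s h ih =>
    rw [Finset.prod_insert h, Finset.sum_insert h, PowerSeries.order_mul, ih]

lemma substPow_order {N : ℕ} (hN : 1 ≤ N) (a : PowerSeries ℂ) {m : ℕ}
    (ha : a.order = (m : ℕ∞)) : (substPow N a).order = ((N * m : ℕ) : ℕ∞) := by
  obtain ⟨hm, hlt⟩ := PowerSeries.order_eq_nat.mp ha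
  rw [PowerSeries.order_eq_nat]
  constructor
  · rw [substPow, PowerSeries.coeff_mk, if_pos ⟨m, rfl⟩,
      Nat.mul_div_cancel_left m (by omega : 0 < N)]
    exact hm
  · intro t ht
    rw [substPow, PowerSeries.coeff_mk]
    split_ifs with hdvd
    · exact hlt _ ((Nat.div_lt_iff_lt_mul (by omega : 0 < N)).mpr (by rw [mul_comm]; omega))
    · rfl

end Orders


set_option maxHeartbeats 2000000 in
/-- **Expansion of an arbitrary polynomial in terms of semiroots.**
Let `q 0, …, q G ∈ ℂ[[X]][Y]` be monic with `deg_Y (q i) = N / E i`.  Then every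
`φ ∈ ℂ[[X]][Y]` is uniquely a finite sum `φ = Σ α_{i₀…i_G} q₀^{i₀} ⋯ q_G^{i_G}` with
`α_{i₀…i_G} ∈ ℂ[[X]]` and `i_k < N (k+1) = E k / E (k+1)` for `k < G`.  Moreover:
(1) the `Y`-degrees of the nonzero terms are pairwise distinct;
(2) if each `q k` is a `k`-semiroot of `f`, the `T`-adic orders of the nonzero series
`α_{i₀…i_G} (T^N) · q₀ (T^N, y(T))^{i₀} ⋯ q_{G-1} (T^N, y(T))^{i_{G-1}}` are pairwise
distinct as `(i₀, …, i_{G-1})` varies over the indices appearing with nonzero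
coefficient. -/
theorem stmt_16 (f : Polynomial (PowerSeries ℂ)) (N G : ℕ) (B : ℕ → ℕ) (y : PowerSeries ℂ)
    (hN : 1 ≤ N) (hmonic : f.Monic) (hdeg : f.natDegree = N) (hirr : Irreducible f)
    (h00 : PowerSeries.constantCoeff (Polynomial.eval 0 f) = 0)
    (hparam : IsNPParam f N y) (hchar : IsCharSeq N y G B)
    (q : Fin (G + 1) → Polynomial (PowerSeries ℂ))
    (hq : ∀ k : Fin (G + 1), (q k).Monic ∧ (q k).natDegree = N / Ebar B (k : ℕ))
    (φ : Polynomial (PowerSeries ℂ)) :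
    (∃! c : (Fin (G + 1) → ℕ) →₀ PowerSeries ℂ,
      (∀ i ∈ c.support, ∀ k : Fin (G + 1), (k : ℕ) < G →
        i k < Ebar B (k : ℕ) / Ebar B ((k : ℕ) + 1)) ∧
      φ = c.sum fun i a => Polynomial.C a * ∏ k, q k ^ i k) ∧
    ∀ c : (Fin (G + 1) → ℕ) →₀ PowerSeries ℂ,
      (∀ i ∈ c.support, ∀ k : Fin (G + 1), (k : ℕ) < G →
        i k < Ebar B (k : ℕ) / Ebar B ((k : ℕ) + 1)) →
      φ = c.sum (fun i a => Polynomial.C a * ∏ k, q k ^ i k) →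
      (∀ i ∈ c.support, ∀ j ∈ c.support, i ≠ j →
        (Polynomial.C (c i) * ∏ k, q k ^ i k).degree ≠
          (Polynomial.C (c j) * ∏ k, q k ^ j k).degree) ∧
      ((∀ k : Fin (G + 1), IsSemiroot N y G B (k : ℕ) (q k)) →
        ∀ i ∈ c.support, ∀ j ∈ c.support,
          (∃ k : Fin (G + 1), (k : ℕ) < G ∧ i k ≠ j k) →
          (substPow N (c i) * ∏ k ∈ Finset.univ.filter (fun k : Fin (G + 1) => (k : ℕ) < G),
              evalCurve N y (q k) ^ i k).order ≠
            (substPow N (c j) * ∏ k ∈ Finset.univ.filter (fun k : Fin (G + 1) => (k : ℕ) < G),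
              evalCurve N y (q k) ^ j k).order) := by
  classical
  have hB0 : B 0 = N := hchar.1
  have hB0pos : 0 < B 0 := by omega
  have epos : ∀ k, 0 < Ebar B k := fun k => Ebar_pos B hB0pos
  have hEdvdN : ∀ k, Ebar B k ∣ N := fun k => hB0 ▸ Ebar_dvd_B B (Nat.zero_le k)
  have hEchain : ∀ k, Ebar B (k + 1) ∣ Ebar B k := fun k => Ebar_dvd_Ebar B (Nat.le_succ k)
  -- the mixed-radix data
  have hd0 : (fun k => N / Ebar B k) 0 = 1 := by
    simp only []
    rw [Ebar_zero, hB0, Nat.div_self (by omega)]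
  have hdr : ∀ k, k < G → (fun k => N / Ebar B k) (k + 1)
      = (fun k => N / Ebar B k) k * (fun k => Ebar B k / Ebar B (k + 1)) k := by
    intro k _
    simp only []
    rw [Nat.div_mul_div_comm (hEdvdN k) (hEchain k), mul_comm N (Ebar B k),
      Nat.mul_div_mul_left _ _ (epos k)]
  have hrpos : ∀ k, k < G → 0 < Ebar B k / Ebar B (k + 1) := fun k _ =>
    Nat.div_pos (Nat.le_of_dvd (epos k) (hEchain k)) (epos (k + 1))
  -- index machinery
  let exti : (Fin (G + 1) → ℕ) → ℕ → ℕ := fun i k => if h : k < G + 1 then i ⟨k, h⟩ else 0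
  let iota : (Fin (G + 1) → ℕ) → ℕ := fun i => ∑ k ∈ Finset.range (G + 1), exti i k * (N / Ebar B k)
  let Adm : (Fin (G + 1) → ℕ) → Prop := fun i => ∀ k : Fin (G + 1), (k : ℕ) < G →
    i k < Ebar B (k : ℕ) / Ebar B ((k : ℕ) + 1)
  let dig : ℕ → (Fin (G + 1) → ℕ) := fun n k =>
    if (k : ℕ) < G then n / (N / Ebar B (k : ℕ)) % (Ebar B (k : ℕ) / Ebar B ((k : ℕ) + 1))
    else n / (N / Ebar B G)
  have hexti : ∀ (i : Fin (G + 1) → ℕ) (k : Fin (G + 1)), exti i (k : ℕ) = i k := by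
    intro i k
    simp only [exti, dif_pos k.isLt, Fin.eta]
  have hextiAdm : ∀ i, Adm i → ∀ k, k < G → exti i k < Ebar B k / Ebar B (k + 1) := by
    intro i hi k hk
    have hk1 : k < G + 1 := by omega
    have := hi ⟨k, hk1⟩ hk
    simpa [exti, dif_pos hk1, show k ≤ G by omega] using this
  have hiota : ∀ i : Fin (G + 1) → ℕ, iota i = ∑ k : Fin (G + 1), i k * (N / Ebar B (k : ℕ)) := by
    intro i
    rw [show iota i = ∑ k ∈ Finset.range (G + 1), exti i k * (N / Ebar B k) from rfl,
      ← Fin.sum_univ_eq_sum_range (fun k => exti i k * (N / Ebar B k)) (G + 1)]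
    exact Finset.sum_congr rfl fun k _ => by rw [hexti]
  -- the basis polynomials
  have hpmonic : ∀ i : Fin (G + 1) → ℕ, (∏ k, q k ^ i k).Monic := fun i =>
    Polynomial.monic_prod_of_monic _ _ fun k _ => ((hq k).1).pow _
  have hpdeg : ∀ i : Fin (G + 1) → ℕ, (∏ k, q k ^ i k).natDegree = iota i := by
    intro i
    rw [Polynomial.natDegree_prod_of_monic _ _ fun k _ => ((hq k).1).pow _, hiota]
    exact Finset.sum_congr rfl fun k _ => by
      rw [Polynomial.natDegree_pow, (hq k).2]
  -- digits are admissible and left inverse to iota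
  have hdigA : ∀ n, Adm (dig n) := by
    intro n k hk
    simp only [dig, if_pos hk]
    exact Nat.mod_lt _ (hrpos _ hk)
  have hdigiota : ∀ n, iota (dig n) = n := by
    intro n
    have h1 : ∀ k, k < G + 1 → exti (dig n) k
        = if k < G then n / (N / Ebar B k) % (Ebar B k / Ebar B (k + 1)) else n / (N / Ebar B G) := by
      intro k hk
      simp only [exti, dig, dif_pos hk]
    have h2 := mr_sum (L := G) (d := fun k => N / Ebar B k)
      (r := fun k => Ebar B k / Ebar B (k + 1)) hd0 hdr n
    show (∑ k ∈ Finset.range (G + 1), exti (dig n) k * (N / Ebar B k)) = n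
    rw [Finset.sum_range_succ]
    rw [Finset.sum_congr rfl (fun k hk => by
      rw [h1 k (by have := Finset.mem_range.mp hk; omega),
        if_pos (Finset.mem_range.mp hk)]),
      h1 G (by omega), if_neg (by omega)]
    exact h2
  have hinj : ∀ i j, Adm i → Adm j → iota i = iota j → i = j := by
    intro i j hi hj hij
    funext k
    rcases Nat.lt_or_ge (k : ℕ) G with hk | hk
    · have e1 := mr_digit_lt (L := G) (d := fun k => N / Ebar B k)
        (r := fun k => Ebar B k / Ebar B (k + 1)) hd0 hdr (exti i) (hextiAdm i hi) k hk
      have e2 := mr_digit_lt (L := G) (d := fun k => N / Ebar B k)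
        (r := fun k => Ebar B k / Ebar B (k + 1)) hd0 hdr (exti j) (hextiAdm j hj) k hk
      have : exti i (k : ℕ) = exti j (k : ℕ) := by
        rw [← e1, ← e2]
        show iota i / _ % _ = iota j / _ % _
        rw [hij]
      rwa [hexti, hexti] at this
    · have hkG : (k : ℕ) = G := by have := k.isLt; omega
      have e1 := mr_digit_top (L := G) (d := fun k => N / Ebar B k)
        (r := fun k => Ebar B k / Ebar B (k + 1)) hd0 hdr (exti i) (hextiAdm i hi)
      have e2 := mr_digit_top (L := G) (d := fun k => N / Ebar B k)
        (r := fun k => Ebar B k / Ebar B (k + 1)) hd0 hdr (exti j) (hextiAdm j hj)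
      have : exti i G = exti j G := by
        rw [← e1, ← e2]
        show iota i / _ = iota j / _
        rw [hij]
      rw [← hkG] at this
      rwa [hexti, hexti] at this
  constructor
  · -- existence and uniqueness of the expansion
    obtain ⟨c, hcA, hceq⟩ := expansion_exists (fun i => ∏ k, q k ^ i k) Adm
      (fun i _ => hpmonic i) dig hdigA (fun n => by rw [hpdeg]; exact hdigiota n)
      (φ.natDegree + 1) φ
      (lt_of_le_of_lt Polynomial.degree_le_natDegree (by exact_mod_cast Nat.lt_succ_self _))
    refine ⟨c, ⟨hcA, hceq⟩, ?_⟩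
    rintro c' ⟨hc'A, hc'eq⟩
    exact expansion_unique (fun i => ∏ k, q k ^ i k) Adm iota (fun i _ => hpmonic i)
      (fun i _ => hpdeg i) hinj c' c hc'A hcA (by rw [← hc'eq, ← hceq])
  · -- the two distinctness statements
    intro c hcA _
    constructor
    · -- distinct degrees
      intro i hi j hj hij
      have hdeg : ∀ i ∈ c.support, (Polynomial.C (c i) * ∏ k, q k ^ i k).degree
          = ((iota i : ℕ) : WithBot ℕ) := by
        intro i hi
        rw [(hpmonic i).degree_mul, Polynomial.degree_C (Finsupp.mem_support_iff.mp hi),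
          zero_add, Polynomial.degree_eq_natDegree (hpmonic i).ne_zero, hpdeg]
      rw [hdeg i hi, hdeg j hj]
      intro heq
      exact hij (hinj i j (hcA i hi) (hcA j hj) (by exact_mod_cast heq))
    · -- distinct orders
      intro hsemi i hi j hj ⟨k₀, hk₀G, hk₀ne⟩
      -- order of each evalCurve
      have hordq : ∀ k : Fin (G + 1), (k : ℕ) < G →
          (evalCurve N y (q k)).order = ((Bbar B ((k : ℕ) + 1) : ℕ) : ℕ∞) := by
        intro k hk
        have := (hsemi k).2.2
        rwa [BbarTop, if_pos (by omega : (k : ℕ) + 1 ≤ G)] at this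
      have horder : ∀ (i : Fin (G + 1) → ℕ), i ∈ c.support → ∃ m : ℕ,
          (substPow N (c i) * ∏ k ∈ Finset.univ.filter (fun k : Fin (G + 1) => (k : ℕ) < G),
            evalCurve N y (q k) ^ i k).order
          = ((N * m + ∑ k ∈ Finset.range G, exti i k * Bbar B (k + 1) : ℕ) : ℕ∞) := by
        intro i hi
        have hci : c i ≠ 0 := Finsupp.mem_support_iff.mp hi
        obtain ⟨m, hm⟩ := (WithTop.ne_top_iff_exists).mp
          (fun h => hci (PowerSeries.order_eq_top.mp h))
        refine ⟨m, ?_⟩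
        rw [PowerSeries.order_mul, order_prod', substPow_order hN (c i) hm.symm]
        have hterm : ∀ k ∈ Finset.univ.filter (fun k : Fin (G + 1) => (k : ℕ) < G),
            (evalCurve N y (q k) ^ i k).order = ((i k * Bbar B ((k : ℕ) + 1) : ℕ) : ℕ∞) := by
          intro k hk
          have hkG := (Finset.mem_filter.mp hk).2
          rw [order_pow', hordq k hkG]
          push_cast
          ring
        rw [Finset.sum_congr rfl hterm]
        rw [← Nat.cast_sum, ← Nat.cast_add]
        congr 1
        congr 1
        -- filter sum to range sum
        have : ∑ k ∈ Finset.univ.filter (fun k : Fin (G + 1) => (k : ℕ) < G),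
            i k * Bbar B ((k : ℕ) + 1)
            = ∑ k ∈ Finset.range G, exti i k * Bbar B (k + 1) := by
          rw [Finset.sum_filter]
          have h1 : ∀ k : Fin (G + 1), (if (k : ℕ) < G then i k * Bbar B ((k : ℕ) + 1) else 0)
              = (fun t : ℕ => if t < G then exti i t * Bbar B (t + 1) else 0) (k : ℕ) := by
            intro k
            simp only [hexti]
          rw [Finset.sum_congr rfl fun k _ => h1 k,
            Fin.sum_univ_eq_sum_range (fun t => if t < G then exti i t * Bbar B (t + 1) else 0)
              (G + 1), Finset.sum_range_succ, if_neg (by omega), add_zero]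
          exact Finset.sum_congr rfl fun k hk => if_pos (Finset.mem_range.mp hk)
        rw [this]
      obtain ⟨m₁, hm₁⟩ := horder i hi
      obtain ⟨m₂, hm₂⟩ := horder j hj
      rw [hm₁, hm₂]
      intro heq
      have heqn : N * m₁ + ∑ k ∈ Finset.range G, exti i k * Bbar B (k + 1)
          = N * m₂ + ∑ k ∈ Finset.range G, exti j k * Bbar B (k + 1) := by
        exact_mod_cast heq
      rw [← hB0] at heqn
      refine orders_distinct B G hB0pos (exti i) (exti j) (hextiAdm i (hcA i hi))
        (hextiAdm j (hcA j hj)) m₁ m₂ ?_ heqn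
      exact ⟨(k₀ : ℕ), hk₀G, by rw [hexti, hexti]; exact hk₀ne⟩
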